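/- Let A ≥ 0 and b, c > 0 satisfy c² = b² + A². Then for every t ≥ 0, e^{-2At} [ (cos(bt) + (A/b) sin(bt))² / c² + (sin(bt))² / b² ] + 4A ∫₀ᵗ e^{-2As} (sin(bs))²/b² ds = 1/c². (With A = |n|/2, b = √(1 + 3|n|²/4), c = √(1 + |n|²), this shows that the variance α_N = E[Φ_N(t,x)²] = Σ_{|n|≤N} ⟨n⟩^{-2} of the stochastic convolution with Gaussian free field initial data is independent of time.) -/

import Mathlib

open Real

/-- Mode-by-mode stationarity of the Gaussian measure under the linear viscous wave flow:
for `c² = b² + A²`,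
`e^{-2At}[ (cos(bt) + (A/b) sin(bt))²/c² + sin²(bt)/b² ] + 4A ∫₀ᵗ e^{-2As} sin²(bs)/b² ds = 1/c²`. -/
theorem viscous_wave_stationarity (A b c : ℝ) (hA : 0 ≤ A) (hb : 0 < b) (hc : 0 < c)
    (h : c ^ 2 = b ^ 2 + A ^ 2) (t : ℝ) (ht : 0 ≤ t) :
    Real.exp (-2 * A * t) *
        ((Real.cos (b * t) + (A / b) * Real.sin (b * t)) ^ 2 / c ^ 2
          + (Real.sin (b * t)) ^ 2 / b ^ 2)
      + 4 * A * ∫ s in (0 : ℝ)..t, Real.exp (-2 * A * s) * (Real.sin (b * s)) ^ 2 / b ^ 2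
      = 1 / c ^ 2 := by
  have hb' : b ≠ 0 := hb.ne'
  have hba : b ^ 2 + A ^ 2 ≠ 0 := by positivity
  set g : ℝ → ℝ := fun s => Real.exp (-2 * A * s) *
      ((Real.cos (b * s) + (A / b) * Real.sin (b * s)) ^ 2 / c ^ 2
        + (Real.sin (b * s)) ^ 2 / b ^ 2) with hg
  have key : ∀ s : ℝ, HasDerivAt g
      (-(4 * A) * (Real.exp (-2 * A * s) * (Real.sin (b * s)) ^ 2 / b ^ 2)) s := by
    intro s
    have he : HasDerivAt (fun x : ℝ => Real.exp (-2 * A * x))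
        (Real.exp (-2 * A * s) * (-2 * A * 1)) s :=
      ((hasDerivAt_id s).const_mul (-2 * A)).exp
    have hcos : HasDerivAt (fun x : ℝ => Real.cos (b * x))
        (-Real.sin (b * s) * (b * 1)) s :=
      ((hasDerivAt_id s).const_mul b).cos
    have hsin : HasDerivAt (fun x : ℝ => Real.sin (b * x))
        (Real.cos (b * s) * (b * 1)) s :=
      ((hasDerivAt_id s).const_mul b).sin
    have hu : HasDerivAt (fun x : ℝ => Real.cos (b * x) + (A / b) * Real.sin (b * x))
        (-Real.sin (b * s) * (b * 1) + (A / b) * (Real.cos (b * s) * (b * 1))) s :=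
      hcos.add (hsin.const_mul (A / b))
    have hinner : HasDerivAt (fun x : ℝ =>
        (Real.cos (b * x) + (A / b) * Real.sin (b * x)) ^ 2 / c ^ 2
          + (Real.sin (b * x)) ^ 2 / b ^ 2)
        ((2 * (Real.cos (b * s) + (A / b) * Real.sin (b * s)) ^ 1 *
            (-Real.sin (b * s) * (b * 1) + (A / b) * (Real.cos (b * s) * (b * 1)))) / c ^ 2
          + (2 * (Real.sin (b * s)) ^ 1 * (Real.cos (b * s) * (b * 1))) / b ^ 2) s :=
      ((hu.pow 2).div_const _).add ((hsin.pow 2).div_const _)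
    have H := he.mul hinner
    refine H.congr_deriv ?_
    rw [h]
    field_simp
    ring
  have hcont : Continuous fun s : ℝ =>
      -(4 * A) * (Real.exp (-2 * A * s) * (Real.sin (b * s)) ^ 2 / b ^ 2) := by
    fun_prop
  have hint : ∫ s in (0 : ℝ)..t,
      -(4 * A) * (Real.exp (-2 * A * s) * (Real.sin (b * s)) ^ 2 / b ^ 2) = g t - g 0 :=
    intervalIntegral.integral_eq_sub_of_hasDerivAt (fun s _ => key s)
      (hcont.intervalIntegrable 0 t)
  rw [intervalIntegral.integral_const_mul] at hint
  have hg0 : g 0 = 1 / c ^ 2 := by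
    simp [hg]
  have : 4 * A * ∫ s in (0 : ℝ)..t,
      Real.exp (-2 * A * s) * (Real.sin (b * s)) ^ 2 / b ^ 2 = g 0 - g t := by
    linarith
  rw [this, hg0]
  ring
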